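/- Let ρ : ℝ^k × ℝ^q × ℝ^d → [0,∞) be a measurable Lebesgue-integrable function (the joint density of (z̃, θ, s_y)), and define f(z̃, u) = ∫_{ℝ^q} ρ(z̃, θ, u) dθ and m(u) = ∫_{ℝ^k} ∫_{ℝ^q} ρ(z̃, θ, u) dθ dz̃. Fix a constant c > 0. Then for almost every point (z̃₀, θ₀, s₀) with respect to the measure with density ρ relative to Lebesgue measure on ℝ^k × ℝ^q × ℝ^d, the following holds: for every sequence of Lebesgue-measurable sets A_t ⊆ ℝ^d and radii r_t > 0 such that A_t ⊆ closedBall(s₀, r_t), vol(A_t) ≥ c · vol(closedBall(s₀, r_t)) for all t, and vol(A_t) → 0 as t → ∞, one has (∫_{A_t} f(z̃₀, u) du) / (∫_{A_t} m(u) du) → f(z̃₀, s₀) / m(s₀). -/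

import Mathlib

set_option maxHeartbeats 2000000


open MeasureTheory Filter Metric

section Aux

variable {d : ℕ}

private lemma div_div_aux (a b v : ℝ) (hv : v ≠ 0) : (a / v) / (b / v) = a / b := by
  rcases eq_or_ne b 0 with hb | hb
  · simp [hb]
  · field_simp

/-- Average of the norm is nonnegative. -/
private lemma avg_nonneg {g : EuclideanSpace ℝ (Fin d) → ℝ} {s : EuclideanSpace ℝ (Fin d)}
    (R : ℝ) : 0 ≤ ⨍ y in closedBall s R, ‖g y - g s‖ := by
  rw [setAverage_eq, smul_eq_mul]
  exact mul_nonneg (inv_nonneg.2 ENNReal.toReal_nonneg)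
    (integral_nonneg fun y => norm_nonneg _)

/-- Core convergence lemma: at a point where the averages of `‖g - g s‖` on small closed
balls tend to `0`, the averages of `g` over measurable sets of bounded eccentricity
converge to `g s`. -/
private lemma keyB {g : EuclideanSpace ℝ (Fin d) → ℝ} (hg : Integrable g)
    {s : EuclideanSpace ℝ (Fin d)} {c : ℝ} (hc : 0 < c)
    (hL : ∀ δ : ℕ → ℝ, Tendsto δ atTop (nhdsWithin 0 (Set.Ioi 0)) →
      Tendsto (fun j => ⨍ y in closedBall s (δ j), ‖g y - g s‖) atTop (nhds 0))
    (A : ℕ → Set (EuclideanSpace ℝ (Fin d))) (r : ℕ → ℝ)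
    (hA : ∀ t, MeasurableSet (A t)) (hr : ∀ t, 0 < r t)
    (hsub : ∀ t, A t ⊆ closedBall s (r t))
    (hvol : ∀ t, ENNReal.ofReal c * volume (closedBall s (r t)) ≤ volume (A t))
    (hto0 : Tendsto (fun t => volume (A t)) atTop (nhds 0)) :
    Tendsto (fun t => (∫ u in A t, g u) / (volume (A t)).toReal) atTop (nhds (g s)) := by
  have hcne : ENNReal.ofReal c ≠ 0 := by
    simp only [ne_eq, ENNReal.ofReal_eq_zero, not_le]; exact hc
  have hBfin : ∀ t, volume (closedBall s (r t)) < ⊤ := fun t => measure_closedBall_lt_top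
  have hBpos : ∀ t, 0 < volume (closedBall s (r t)) := fun t =>
    measure_closedBall_pos volume s (hr t)
  have hApos : ∀ t, 0 < volume (A t) := fun t =>
    lt_of_lt_of_le (ENNReal.mul_pos hcne (hBpos t).ne') (hvol t)
  have hAfin : ∀ t, volume (A t) < ⊤ := fun t =>
    (measure_mono (hsub t)).trans_lt (hBfin t)
  have hVpos : ∀ t, 0 < (volume (A t)).toReal := fun t =>
    ENNReal.toReal_pos (hApos t).ne' (hAfin t).ne
  -- the volumes of the balls tend to 0
  have hBto0 : Tendsto (fun t => volume (closedBall s (r t))) atTop (nhds 0) := by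
    have h1 : Tendsto (fun t => (ENNReal.ofReal c)⁻¹ * volume (A t)) atTop
        (nhds ((ENNReal.ofReal c)⁻¹ * 0)) :=
      ENNReal.Tendsto.const_mul hto0 (Or.inr (ENNReal.inv_ne_top.2 hcne))
    rw [mul_zero] at h1
    refine tendsto_of_tendsto_of_tendsto_of_le_of_le tendsto_const_nhds h1
      (fun t => zero_le) (fun t => ?_)
    calc volume (closedBall s (r t))
        = (ENNReal.ofReal c)⁻¹ * (ENNReal.ofReal c * volume (closedBall s (r t))) := by
          rw [← mul_assoc, ENNReal.inv_mul_cancel hcne ENNReal.ofReal_ne_top, one_mul]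
      _ ≤ (ENNReal.ofReal c)⁻¹ * volume (A t) := by have := hvol t; gcongr
  -- the radii tend to 0 from the right
  have hr0 : Tendsto r atTop (nhdsWithin 0 (Set.Ioi 0)) := by
    rw [tendsto_nhdsWithin_iff]
    refine ⟨tendsto_order.2 ⟨fun a ha => Eventually.of_forall fun t => lt_trans ha (hr t),
      fun b hb => ?_⟩, Eventually.of_forall fun t => hr t⟩
    have hbpos : 0 < volume (closedBall s b) := measure_closedBall_pos volume s hb
    filter_upwards [hBto0.eventually_lt_const hbpos] with t ht
    by_contra h
    push_neg at h
    exact absurd (measure_mono (closedBall_subset_closedBall h)) (not_le.2 ht)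
  have hav := hL r hr0
  -- key bound
  have hbound : ∀ t, dist ((∫ u in A t, g u) / (volume (A t)).toReal) (g s)
      ≤ (⨍ y in closedBall s (r t), ‖g y - g s‖) / c := by
    intro t
    set V := (volume (A t)).toReal with hV
    set W := (volume (closedBall s (r t))).toReal with hW
    have hWpos : 0 < W := ENNReal.toReal_pos (hBpos t).ne' (hBfin t).ne
    have hAint : IntegrableOn g (A t) volume := hg.integrableOn
    have hBint : IntegrableOn (fun y => g y - g s) (closedBall s (r t)) volume :=
      hg.integrableOn.sub (integrableOn_const (hBfin t).ne)
    have hconst : IntegrableOn (fun _ => g s) (A t) volume :=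
      integrableOn_const (hAfin t).ne
    have e1 : (∫ u in A t, g u) / V - g s = (∫ u in A t, (g u - g s)) / V := by
      rw [integral_sub hAint hconst, setIntegral_const, smul_eq_mul, sub_div, measureReal_def, ← hV,
        mul_comm, mul_div_assoc, div_self (hVpos t).ne', mul_one]
    have e2 : ‖∫ u in A t, (g u - g s)‖ ≤ ∫ u in A t, ‖g u - g s‖ :=
      norm_integral_le_integral_norm _
    have e3 : (∫ u in A t, ‖g u - g s‖) ≤ ∫ u in closedBall s (r t), ‖g u - g s‖ :=
      setIntegral_mono_set hBint.norm (Eventually.of_forall fun u => norm_nonneg _)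
        (HasSubset.Subset.eventuallyLE (hsub t))
    have e4 : (∫ u in closedBall s (r t), ‖g u - g s‖)
        = (⨍ y in closedBall s (r t), ‖g y - g s‖) * W := by
      rw [setAverage_eq, smul_eq_mul, measureReal_def, ← hW]
      field_simp
    have e5 : c * W ≤ V := by
      have h := ENNReal.toReal_mono (hAfin t).ne (hvol t)
      rwa [ENNReal.toReal_mul, ENNReal.toReal_ofReal hc.le] at h
    rw [Real.dist_eq, e1, abs_div, abs_of_pos (hVpos t)]
    have e6 : |∫ u in A t, (g u - g s)| ≤ (⨍ y in closedBall s (r t), ‖g y - g s‖) * W := by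
      calc |∫ u in A t, (g u - g s)| = ‖∫ u in A t, (g u - g s)‖ := (Real.norm_eq_abs _).symm
        _ ≤ ∫ u in A t, ‖g u - g s‖ := e2
        _ ≤ ∫ u in closedBall s (r t), ‖g u - g s‖ := e3
        _ = _ := e4
    calc |∫ u in A t, (g u - g s)| / V
        ≤ ((⨍ y in closedBall s (r t), ‖g y - g s‖) * W) / V := by
          gcongr
      _ = (⨍ y in closedBall s (r t), ‖g y - g s‖) * (W / V) := by rw [mul_div_assoc]
      _ ≤ (⨍ y in closedBall s (r t), ‖g y - g s‖) * (1 / c) := by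
          refine mul_le_mul_of_nonneg_left ?_ (avg_nonneg _)
          rw [div_le_div_iff₀ (hVpos t) hc, one_mul, mul_comm]
          exact e5
      _ = (⨍ y in closedBall s (r t), ‖g y - g s‖) / c := by rw [mul_one_div]
  rw [tendsto_iff_dist_tendsto_zero]
  have hq : Tendsto (fun t => (⨍ y in closedBall s (r t), ‖g y - g s‖) / c) atTop
      (nhds (0 / c)) := hav.div_const c
  rw [zero_div] at hq
  exact squeeze_zero (fun t => dist_nonneg) hbound hq

/-- Lebesgue differentiation: a.e. point satisfies the average condition along any
sequence of radii tending to `0` from the right. -/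
private lemma keyC {g : EuclideanSpace ℝ (Fin d) → ℝ} (hg : Integrable g) :
    ∀ᵐ s : EuclideanSpace ℝ (Fin d) ∂volume, ∀ δ : ℕ → ℝ,
      Tendsto δ atTop (nhdsWithin 0 (Set.Ioi 0)) →
      Tendsto (fun j => ⨍ y in closedBall s (δ j), ‖g y - g s‖) atTop (nhds 0) := by
  filter_upwards [IsUnifLocDoublingMeasure.ae_tendsto_average_norm_sub
    (volume : Measure (EuclideanSpace ℝ (Fin d))) hg.locallyIntegrable 1] with s hs δ hδ
  refine hs (fun _ => s) δ hδ ?_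
  filter_upwards [hδ.eventually self_mem_nhdsWithin] with j hj
  exact mem_closedBall_self (by simpa using (Set.mem_Ioi.1 hj).le)

/-- Dyadic test quantity for the Lebesgue point property (measurable in all arguments). -/
private noncomputable def Phi (g : EuclideanSpace ℝ (Fin d) → ℝ) (s : EuclideanSpace ℝ (Fin d))
    (n : ℕ) : ENNReal :=
  (∫⁻ y in closedBall s ((1 / 2 : ℝ) ^ n), ‖g y - g s‖₊) *
    (volume (closedBall (0 : EuclideanSpace ℝ (Fin d)) ((1 / 2 : ℝ) ^ (n + 1))))⁻¹

private lemma kappa_pos (n : ℕ) :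
    0 < volume (closedBall (0 : EuclideanSpace ℝ (Fin d)) ((1 / 2 : ℝ) ^ (n + 1))) :=
  measure_closedBall_pos volume _ (by positivity)

private lemma kappa_fin (n : ℕ) :
    volume (closedBall (0 : EuclideanSpace ℝ (Fin d)) ((1 / 2 : ℝ) ^ (n + 1))) < ⊤ :=
  measure_closedBall_lt_top

private lemma exists_dyadic {x : ℝ} (hx0 : 0 < x) {N : ℕ} (hxN : x < (1 / 2 : ℝ) ^ N) :
    ∃ n, N ≤ n ∧ (1 / 2 : ℝ) ^ (n + 1) < x ∧ x ≤ (1 / 2 : ℝ) ^ n := by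
  have hex : ∃ m, (1 / 2 : ℝ) ^ m < x := exists_pow_lt_of_lt_one hx0 (by norm_num)
  classical
  have hm0 : Nat.find hex ≠ 0 := by
    intro h
    have hm := Nat.find_spec hex
    rw [h, pow_zero] at hm
    have h1 : x < 1 := lt_of_lt_of_le hxN (pow_le_one₀ (by norm_num) (by norm_num))
    linarith
  obtain ⟨n, hn⟩ := Nat.exists_eq_succ_of_ne_zero hm0
  have hm : (1 / 2 : ℝ) ^ (n + 1) < x := by
    have := Nat.find_spec hex
    rwa [hn] at this
  have hnlt : ¬((1 / 2 : ℝ) ^ n < x) := Nat.find_min hex (by omega)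
  push_neg at hnlt
  refine ⟨n, ?_, hm, hnlt⟩
  by_contra h
  push_neg at h
  have : (1 / 2 : ℝ) ^ N ≤ (1 / 2 : ℝ) ^ (n + 1) :=
    pow_le_pow_of_le_one (by norm_num) (by norm_num) (Nat.succ_le_of_lt h)
  linarith

private lemma phi_forward {g : EuclideanSpace ℝ (Fin d) → ℝ} (hg : Integrable g)
    {s : EuclideanSpace ℝ (Fin d)} (hΦ : Tendsto (Phi g s) atTop (nhds 0)) :
    ∀ δ : ℕ → ℝ, Tendsto δ atTop (nhdsWithin 0 (Set.Ioi 0)) →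
      Tendsto (fun j => ⨍ y in closedBall s (δ j), ‖g y - g s‖) atTop (nhds 0) := by
  intro δ hδ
  have hsubint : ∀ R : ℝ, IntegrableOn (fun y => g y - g s) (closedBall s R) volume :=
    fun R => hg.integrableOn.sub
      (integrableOn_const measure_closedBall_lt_top.ne)
  have hIfin : ∀ R : ℝ, (∫⁻ y in closedBall s R, (‖g y - g s‖₊ : ENNReal)) < ⊤ :=
    fun R => (hsubint R).hasFiniteIntegral
  rw [tendsto_order]
  constructor
  · intro a ha
    exact Eventually.of_forall fun j => lt_of_lt_of_le ha (avg_nonneg _)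
  · intro b hb
    obtain ⟨N, hN⟩ := ENNReal.tendsto_atTop_zero.1 hΦ (ENNReal.ofReal (b / 2))
      (ENNReal.ofReal_pos.2 (by linarith))
    have hIoo : Set.Ioo (0 : ℝ) ((1 / 2 : ℝ) ^ N) ∈ nhdsWithin (0 : ℝ) (Set.Ioi 0) :=
      Ioo_mem_nhdsGT (by positivity)
    filter_upwards [hδ.eventually hIoo] with j hj
    obtain ⟨n, hNn, hlt, hle⟩ := exists_dyadic hj.1 hj.2
    have hWpos : 0 < (volume (closedBall s (δ j))).toReal :=
      ENNReal.toReal_pos (measure_closedBall_pos volume s hj.1).ne'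
        measure_closedBall_lt_top.ne
    -- the average is at most (Phi g s n).toReal
    have hIeq : (∫⁻ y in closedBall s (δ j), (‖g y - g s‖₊ : ENNReal)).toReal
        = ∫ y in closedBall s (δ j), ‖g y - g s‖ := by
      have hoi := ofReal_integral_norm_eq_lintegral_enorm (hsubint (δ j))
      simp only [enorm_eq_nnnorm] at hoi
      rw [← hoi,
        ENNReal.toReal_ofReal (integral_nonneg fun y => norm_nonneg _)]
    have hκpos : 0 < (volume (closedBall (0 : EuclideanSpace ℝ (Fin d))
        ((1 / 2 : ℝ) ^ (n + 1)))).toReal :=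
      ENNReal.toReal_pos (kappa_pos n).ne' (kappa_fin n).ne
    have hIle : (∫⁻ y in closedBall s (δ j), (‖g y - g s‖₊ : ENNReal)).toReal
        ≤ (∫⁻ y in closedBall s ((1 / 2 : ℝ) ^ n), (‖g y - g s‖₊ : ENNReal)).toReal :=
      ENNReal.toReal_mono (hIfin _).ne
        (lintegral_mono_set (closedBall_subset_closedBall hle))
    have hκle : (volume (closedBall (0 : EuclideanSpace ℝ (Fin d))
        ((1 / 2 : ℝ) ^ (n + 1)))).toReal ≤ (volume (closedBall s (δ j))).toReal := by
      refine ENNReal.toReal_mono measure_closedBall_lt_top.ne ?_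
      rw [Measure.addHaar_closedBall_center volume s]
      exact measure_mono (closedBall_subset_closedBall hlt.le)
    have havle : (⨍ y in closedBall s (δ j), ‖g y - g s‖) ≤ (Phi g s n).toReal := by
      rw [setAverage_eq, smul_eq_mul, ← hIeq, Phi, ENNReal.toReal_mul, ENNReal.toReal_inv,
        inv_mul_eq_div, ← div_eq_mul_inv]
      exact div_le_div₀ ENNReal.toReal_nonneg hIle hκpos hκle
    have h2 : (Phi g s n).toReal ≤ b / 2 :=
      ENNReal.toReal_le_of_le_ofReal (by linarith) (hN n hNn)
    calc ⨍ y in closedBall s (δ j), ‖g y - g s‖ ≤ (Phi g s n).toReal := havle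
      _ ≤ b / 2 := h2
      _ < b := by linarith

private lemma phi_backward {g : EuclideanSpace ℝ (Fin d) → ℝ} (hg : Integrable g)
    {s : EuclideanSpace ℝ (Fin d)}
    (hL : ∀ δ : ℕ → ℝ, Tendsto δ atTop (nhdsWithin 0 (Set.Ioi 0)) →
      Tendsto (fun j => ⨍ y in closedBall s (δ j), ‖g y - g s‖) atTop (nhds 0)) :
    Tendsto (Phi g s) atTop (nhds 0) := by
  have hsubint : ∀ R : ℝ, IntegrableOn (fun y => g y - g s) (closedBall s R) volume :=
    fun R => hg.integrableOn.sub
      (integrableOn_const measure_closedBall_lt_top.ne)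
  have hδ : Tendsto (fun n : ℕ => (1 / 2 : ℝ) ^ n) atTop (nhdsWithin 0 (Set.Ioi 0)) := by
    rw [tendsto_nhdsWithin_iff]
    exact ⟨tendsto_pow_atTop_nhds_zero_of_lt_one (by norm_num) (by norm_num),
      Eventually.of_forall fun n => pow_pos (by norm_num : (0:ℝ) < 1 / 2) n⟩
  have hav := hL _ hδ
  have heq : ∀ n, Phi g s n =
      ENNReal.ofReal (⨍ y in closedBall s ((1 / 2 : ℝ) ^ n), ‖g y - g s‖) *
        ENNReal.ofReal ((2 : ℝ) ^ (Module.finrank ℝ (EuclideanSpace ℝ (Fin d)))) := by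
    intro n
    have hWpos : 0 < (volume (closedBall s ((1 / 2 : ℝ) ^ n))).toReal :=
      ENNReal.toReal_pos (measure_closedBall_pos volume s (by positivity)).ne'
        measure_closedBall_lt_top.ne
    have hIeq : (∫⁻ y in closedBall s ((1 / 2 : ℝ) ^ n), (‖g y - g s‖₊ : ENNReal))
        = ENNReal.ofReal ((⨍ y in closedBall s ((1 / 2 : ℝ) ^ n), ‖g y - g s‖) *
            (volume (closedBall s ((1 / 2 : ℝ) ^ n))).toReal) := by
      have hoi := ofReal_integral_norm_eq_lintegral_enorm (hsubint ((1 / 2 : ℝ) ^ n))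
      simp only [enorm_eq_nnnorm] at hoi
      rw [← hoi]
      congr 1
      rw [setAverage_eq, smul_eq_mul, measureReal_def, mul_right_comm, inv_mul_cancel₀ hWpos.ne', one_mul]
    have hball : volume (closedBall s ((1 / 2 : ℝ) ^ n))
        = ENNReal.ofReal ((2 : ℝ) ^ (Module.finrank ℝ (EuclideanSpace ℝ (Fin d)))) *
          volume (closedBall (0 : EuclideanSpace ℝ (Fin d)) ((1 / 2 : ℝ) ^ (n + 1))) := by
      rw [Measure.addHaar_closedBall_center volume s]
      have harg : (1 / 2 : ℝ) ^ n = 2 * (1 / 2 : ℝ) ^ (n + 1) := by ring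
      rw [harg]
      exact Measure.addHaar_closedBall_mul_of_pos volume _ two_pos _
    rw [Phi, hIeq, ENNReal.ofReal_mul (avg_nonneg _), ENNReal.ofReal_toReal
      measure_closedBall_lt_top.ne, hball, mul_assoc, mul_assoc,
      ENNReal.mul_inv_cancel (kappa_pos n).ne' (kappa_fin n).ne, mul_one]
  have h1 : Tendsto (fun n =>
      ENNReal.ofReal (⨍ y in closedBall s ((1 / 2 : ℝ) ^ n), ‖g y - g s‖) *
        ENNReal.ofReal ((2 : ℝ) ^ (Module.finrank ℝ (EuclideanSpace ℝ (Fin d))))) atTop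
      (nhds (ENNReal.ofReal 0 *
        ENNReal.ofReal ((2 : ℝ) ^ (Module.finrank ℝ (EuclideanSpace ℝ (Fin d)))))) :=
    ENNReal.Tendsto.mul_const (ENNReal.tendsto_ofReal hav) (Or.inr ENNReal.ofReal_ne_top)
  rw [ENNReal.ofReal_zero, zero_mul] at h1
  exact h1.congr fun n => (heq n).symm

private lemma measurableSet_tendsto_zero {α : Type*} [MeasurableSpace α]
    (Φ : α → ℕ → ENNReal) (hΦ : ∀ n, Measurable fun p => Φ p n) :
    MeasurableSet {p | Tendsto (Φ p) atTop (nhds 0)} := by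
  have hset : {p | Tendsto (Φ p) atTop (nhds 0)} =
      ⋂ (j : ℕ), ⋃ (N : ℕ), ⋂ (n : ℕ), ⋂ (_ : N ≤ n),
        {p | Φ p n ≤ ((j : ENNReal) + 1)⁻¹} := by
    ext p
    simp only [Set.mem_setOf_eq, Set.mem_iInter, Set.mem_iUnion]
    rw [ENNReal.tendsto_atTop_zero]
    constructor
    · intro h j
      obtain ⟨N, hN⟩ := h ((j : ENNReal) + 1)⁻¹
        (ENNReal.inv_pos.2 (by simp [ENNReal.add_eq_top]))
      exact ⟨N, fun n => hN n⟩
    · intro h ε hε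
      obtain ⟨j, hj⟩ := ENNReal.exists_inv_nat_lt hε.ne'
      obtain ⟨N, hN⟩ := h j
      refine ⟨N, fun n hn => le_trans (hN n hn) (le_trans ?_ hj.le)⟩
      exact ENNReal.inv_le_inv' (le_add_right le_rfl)
  rw [hset]
  exact MeasurableSet.iInter fun j => MeasurableSet.iUnion fun N =>
    MeasurableSet.iInter fun n => MeasurableSet.iInter fun _ =>
      measurableSet_le (hΦ n) measurable_const

end Aux

/-- Proposition 1 (marginal part): the ABC-P posterior predictive density converges to the
exact posterior predictive density as the acceptance regions shrink with bounded eccentricity. -/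
theorem abcP_marginal_limit {k q d : ℕ}
    (ρ : (EuclideanSpace ℝ (Fin k)) × (EuclideanSpace ℝ (Fin q)) × (EuclideanSpace ℝ (Fin d)) → ℝ)
    (hρmeas : Measurable ρ) (hρint : Integrable ρ) (hρnonneg : ∀ x, 0 ≤ ρ x)
    (c : ℝ) (hc : 0 < c)
    (f : EuclideanSpace ℝ (Fin k) → EuclideanSpace ℝ (Fin d) → ℝ)
    (hf : ∀ zt u, f zt u = ∫ θ, ρ (zt, θ, u))
    (m : EuclideanSpace ℝ (Fin d) → ℝ)
    (hm : ∀ u, m u = ∫ zt, ∫ θ, ρ (zt, θ, u)) :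
    ∀ᵐ x ∂(volume.withDensity (fun x => ENNReal.ofReal (ρ x))),
      ∀ (A : ℕ → Set (EuclideanSpace ℝ (Fin d))) (r : ℕ → ℝ),
        (∀ t, MeasurableSet (A t)) →
        (∀ t, 0 < r t) →
        (∀ t, A t ⊆ Metric.closedBall x.2.2 (r t)) →
        (∀ t, ENNReal.ofReal c * volume (Metric.closedBall x.2.2 (r t)) ≤ volume (A t)) →
        Tendsto (fun t => volume (A t)) atTop (nhds 0) →
        Tendsto (fun t => (∫ u in A t, f x.1 u) / (∫ u in A t, m u)) atTop
          (nhds (f x.1 x.2.2 / m x.2.2)) := by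
  classical
  -- joint measurability of (zt, u) ↦ f zt u
  have hFm : Measurable (fun p : (EuclideanSpace ℝ (Fin k)) × (EuclideanSpace ℝ (Fin d)) =>
      f p.1 p.2) := by
    have h1 : Measurable fun w : ((EuclideanSpace ℝ (Fin k)) × (EuclideanSpace ℝ (Fin d))) ×
        (EuclideanSpace ℝ (Fin q)) => ρ (w.1.1, w.2, w.1.2) :=
      hρmeas.comp ((measurable_fst.comp measurable_fst).prodMk
        (measurable_snd.prodMk (measurable_snd.comp measurable_fst)))
    have h2 : StronglyMeasurable fun p : (EuclideanSpace ℝ (Fin k)) ×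
        (EuclideanSpace ℝ (Fin d)) =>
        ∫ θ, ρ (p.1, θ, p.2) ∂(volume : Measure (EuclideanSpace ℝ (Fin q))) :=
      h1.stronglyMeasurable.integral_prod_right'
    have h3 : (fun p : (EuclideanSpace ℝ (Fin k)) × (EuclideanSpace ℝ (Fin d)) => f p.1 p.2)
        = fun p => ∫ θ, ρ (p.1, θ, p.2) := funext fun p => hf p.1 p.2
    rw [h3]
    exact h2.measurable
  have hfm : ∀ zt, StronglyMeasurable (f zt) :=
    fun zt => (hFm.comp measurable_prodMk_left).stronglyMeasurable
  -- product measure view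
  have hveq : (volume : Measure ((EuclideanSpace ℝ (Fin k)) × (EuclideanSpace ℝ (Fin q)) ×
      (EuclideanSpace ℝ (Fin d)))) =
      (volume : Measure (EuclideanSpace ℝ (Fin k))).prod
        ((volume : Measure (EuclideanSpace ℝ (Fin q))).prod
          (volume : Measure (EuclideanSpace ℝ (Fin d)))) := by
    rfl
  set e := (MeasurableEquiv.prodAssoc :
    ((EuclideanSpace ℝ (Fin k)) × (EuclideanSpace ℝ (Fin q))) × (EuclideanSpace ℝ (Fin d)) ≃ᵐ
      (EuclideanSpace ℝ (Fin k)) × (EuclideanSpace ℝ (Fin q)) × (EuclideanSpace ℝ (Fin d)))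
    with he
  have hmp : MeasurePreserving e
      (((volume : Measure (EuclideanSpace ℝ (Fin k))).prod
        (volume : Measure (EuclideanSpace ℝ (Fin q)))).prod
        (volume : Measure (EuclideanSpace ℝ (Fin d))))
      ((volume : Measure (EuclideanSpace ℝ (Fin k))).prod
        ((volume : Measure (EuclideanSpace ℝ (Fin q))).prod
          (volume : Measure (EuclideanSpace ℝ (Fin d))))) :=
    measurePreserving_prodAssoc _ _ _
  have hρ'int : Integrable (fun w : ((EuclideanSpace ℝ (Fin k)) × (EuclideanSpace ℝ (Fin q))) ×
      (EuclideanSpace ℝ (Fin d)) => ρ (e w))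
      (((volume : Measure (EuclideanSpace ℝ (Fin k))).prod
        (volume : Measure (EuclideanSpace ℝ (Fin q)))).prod
        (volume : Measure (EuclideanSpace ℝ (Fin d)))) := by
    have h0 : Integrable ρ ((volume : Measure (EuclideanSpace ℝ (Fin k))).prod
        ((volume : Measure (EuclideanSpace ℝ (Fin q))).prod
          (volume : Measure (EuclideanSpace ℝ (Fin d))))) := by
      rw [← hveq]; exact hρint
    exact (hmp.integrable_comp_emb e.measurableEmbedding).2 h0
  -- m facts
  have hm' : ∀ᵐ u ∂(volume : Measure (EuclideanSpace ℝ (Fin d))),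
      m u = ∫ p, ρ (e (p, u)) ∂((volume : Measure (EuclideanSpace ℝ (Fin k))).prod
        (volume : Measure (EuclideanSpace ℝ (Fin q)))) := by
    filter_upwards [hρ'int.prod_left_ae] with u hu
    rw [hm u, MeasureTheory.integral_prod _ hu]
    rfl
  have hmint : Integrable m (volume : Measure (EuclideanSpace ℝ (Fin d))) := by
    have h1 := hρ'int.integral_prod_right
    exact h1.congr (hm'.mono fun u h => h.symm)
  have hmm : Measurable m := by
    have h2 : StronglyMeasurable fun u : EuclideanSpace ℝ (Fin d) =>
        ∫ zt, f zt u ∂(volume : Measure (EuclideanSpace ℝ (Fin k))) :=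
      hFm.stronglyMeasurable.integral_prod_left'
    have h3 : m = fun u => ∫ zt, f zt u ∂(volume : Measure (EuclideanSpace ℝ (Fin k))) := by
      funext u
      rw [hm u]
      exact integral_congr_ae (Eventually.of_forall fun zt => (hf zt u).symm)
    rw [h3]
    exact h2.measurable
  -- a.e. zt, f zt is integrable
  have hρint' : Integrable ρ ((volume : Measure (EuclideanSpace ℝ (Fin k))).prod
      ((volume : Measure (EuclideanSpace ℝ (Fin q))).prod
        (volume : Measure (EuclideanSpace ℝ (Fin d))))) := by
    rw [← hveq]; exact hρint
  have hfae : ∀ᵐ zt ∂(volume : Measure (EuclideanSpace ℝ (Fin k))),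
      Integrable (f zt) (volume : Measure (EuclideanSpace ℝ (Fin d))) := by
    filter_upwards [hρint'.prod_right_ae] with zt hzt
    have h4 := hzt.integral_prod_right
    have h5 : f zt = fun u => ∫ θ, ρ (zt, θ, u) := funext fun u => hf zt u
    rw [h5]
    exact h4
  -- measurability of the dyadic quantity in both variables
  have hPhi2 : ∀ n, Measurable fun p : (EuclideanSpace ℝ (Fin k)) × (EuclideanSpace ℝ (Fin d)) =>
      Phi (f p.1) p.2 n := by
    intro n
    have hv1 : Measurable fun w : ((EuclideanSpace ℝ (Fin k)) × (EuclideanSpace ℝ (Fin d))) ×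
        (EuclideanSpace ℝ (Fin d)) => f w.1.1 w.2 :=
      hFm.comp ((measurable_fst.fst).prodMk measurable_snd)
    have hv2 : Measurable fun w : ((EuclideanSpace ℝ (Fin k)) × (EuclideanSpace ℝ (Fin d))) ×
        (EuclideanSpace ℝ (Fin d)) => f w.1.1 w.1.2 := hFm.comp measurable_fst
    have hH : Measurable fun w : ((EuclideanSpace ℝ (Fin k)) × (EuclideanSpace ℝ (Fin d))) ×
        (EuclideanSpace ℝ (Fin d)) =>
        Set.indicator (closedBall w.1.2 ((1 / 2 : ℝ) ^ n))
          (fun y => (‖f w.1.1 y - f w.1.1 w.1.2‖₊ : ENNReal)) w.2 := by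
      have heq : (fun w : ((EuclideanSpace ℝ (Fin k)) × (EuclideanSpace ℝ (Fin d))) ×
          (EuclideanSpace ℝ (Fin d)) =>
          Set.indicator (closedBall w.1.2 ((1 / 2 : ℝ) ^ n))
            (fun y => (‖f w.1.1 y - f w.1.1 w.1.2‖₊ : ENNReal)) w.2) =
          fun w => if dist w.2 w.1.2 ≤ (1 / 2 : ℝ) ^ n
            then (‖f w.1.1 w.2 - f w.1.1 w.1.2‖₊ : ENNReal) else 0 := by
        funext w
        rw [Set.indicator_apply]
        congr 1
      rw [heq]
      refine Measurable.ite ?_ ((hv1.sub hv2).nnnorm.coe_nnreal_ennreal) measurable_const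
      exact measurableSet_le (measurable_snd.dist (measurable_fst.snd)) measurable_const
    have heq2 : (fun p : (EuclideanSpace ℝ (Fin k)) × (EuclideanSpace ℝ (Fin d)) =>
        Phi (f p.1) p.2 n) = fun p =>
        (∫⁻ y, Set.indicator (closedBall p.2 ((1 / 2 : ℝ) ^ n))
          (fun y => (‖f p.1 y - f p.1 p.2‖₊ : ENNReal)) y) *
          (volume (closedBall (0 : EuclideanSpace ℝ (Fin d)) ((1 / 2 : ℝ) ^ (n + 1))))⁻¹ := by
      funext p
      rw [Phi, lintegral_indicator measurableSet_closedBall]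
    rw [heq2]
    exact (hH.lintegral_prod_right').mul_const _
  -- the good set G
  set G : Set ((EuclideanSpace ℝ (Fin k)) × (EuclideanSpace ℝ (Fin d))) :=
    {p | Integrable (f p.1) volume} ∩ {p | Tendsto (Phi (f p.1) p.2) atTop (nhds 0)} with hGdef
  have hGmeas : MeasurableSet G := by
    refine MeasurableSet.inter ?_ (measurableSet_tendsto_zero _ hPhi2)
    have hIm : Measurable fun zt : EuclideanSpace ℝ (Fin k) =>
        ∫⁻ u, (‖f zt u‖₊ : ENNReal) ∂(volume : Measure (EuclideanSpace ℝ (Fin d))) :=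
      (hFm.nnnorm.coe_nnreal_ennreal).lintegral_prod_right'
    have hset : {p : (EuclideanSpace ℝ (Fin k)) × (EuclideanSpace ℝ (Fin d)) |
        Integrable (f p.1) volume} =
        (fun p : (EuclideanSpace ℝ (Fin k)) × (EuclideanSpace ℝ (Fin d)) => p.1) ⁻¹'
          {zt | (∫⁻ u, (‖f zt u‖₊ : ENNReal)
            ∂(volume : Measure (EuclideanSpace ℝ (Fin d)))) < ⊤} := by
      ext p
      simp only [Set.mem_setOf_eq, Set.mem_preimage]
      constructor
      · intro h; exact h.2
      · intro h; exact ⟨(hfm p.1).aestronglyMeasurable, h⟩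
    rw [hset]
    exact measurable_fst (measurableSet_lt hIm measurable_const)
  have hGae : ∀ᵐ zt ∂(volume : Measure (EuclideanSpace ℝ (Fin k))),
      ∀ᵐ s ∂(volume : Measure (EuclideanSpace ℝ (Fin d))), (zt, s) ∈ G := by
    filter_upwards [hfae] with zt hzt
    filter_upwards [keyC hzt] with s hs
    exact ⟨hzt, phi_backward hzt hs⟩
  have hGnull : ((volume : Measure (EuclideanSpace ℝ (Fin k))).prod
      (volume : Measure (EuclideanSpace ℝ (Fin d)))) Gᶜ = 0 := by
    rw [Measure.measure_prod_null hGmeas.compl]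
    filter_upwards [hGae] with zt hzt
    exact ae_iff.1 hzt
  -- lifting null sets of (zt, s) to the triple product
  have hlift : ∀ B : Set ((EuclideanSpace ℝ (Fin k)) × (EuclideanSpace ℝ (Fin d))),
      MeasurableSet B →
      ((volume : Measure (EuclideanSpace ℝ (Fin k))).prod
        (volume : Measure (EuclideanSpace ℝ (Fin d)))) B = 0 →
      (volume : Measure ((EuclideanSpace ℝ (Fin k)) × (EuclideanSpace ℝ (Fin q)) ×
        (EuclideanSpace ℝ (Fin d)))) {x | (x.1, x.2.2) ∈ B} = 0 := by
    intro B hBm hB0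
    have hT : Measurable fun x : (EuclideanSpace ℝ (Fin k)) × (EuclideanSpace ℝ (Fin q)) ×
        (EuclideanSpace ℝ (Fin d)) => (x.1, x.2.2) :=
      measurable_fst.prodMk (measurable_snd.snd)
    have hSm : MeasurableSet {x : (EuclideanSpace ℝ (Fin k)) × (EuclideanSpace ℝ (Fin q)) ×
        (EuclideanSpace ℝ (Fin d)) | (x.1, x.2.2) ∈ B} := hT hBm
    rw [hveq, Measure.prod_apply hSm]
    have hae : ∀ᵐ zt ∂(volume : Measure (EuclideanSpace ℝ (Fin k))),
        ((volume : Measure (EuclideanSpace ℝ (Fin q))).prod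
          (volume : Measure (EuclideanSpace ℝ (Fin d))))
          (Prod.mk zt ⁻¹' {x : (EuclideanSpace ℝ (Fin k)) × (EuclideanSpace ℝ (Fin q)) ×
            (EuclideanSpace ℝ (Fin d)) | (x.1, x.2.2) ∈ B}) = 0 := by
      filter_upwards [(Measure.measure_prod_null hBm).1 hB0] with zt hzt
      simp only [Pi.zero_apply] at hzt
      have hCm : MeasurableSet (Prod.mk zt ⁻¹' B) := measurable_prodMk_left hBm
      have heqset : (Prod.mk zt ⁻¹' {x : (EuclideanSpace ℝ (Fin k)) ×
          (EuclideanSpace ℝ (Fin q)) × (EuclideanSpace ℝ (Fin d)) | (x.1, x.2.2) ∈ B}) =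
          Prod.snd ⁻¹' (Prod.mk zt ⁻¹' B) := rfl
      rw [heqset, Measure.prod_apply (measurable_snd hCm)]
      have hfib : ∀ θ : EuclideanSpace ℝ (Fin q),
          Prod.mk θ ⁻¹' (Prod.snd ⁻¹' (Prod.mk zt ⁻¹' B)) = Prod.mk zt ⁻¹' B := fun θ => rfl
      simp only [hfib, hzt, lintegral_const, zero_mul]
    rw [lintegral_congr_ae hae, lintegral_zero]
  have htripleG : ∀ᵐ x ∂(volume : Measure ((EuclideanSpace ℝ (Fin k)) ×
      (EuclideanSpace ℝ (Fin q)) × (EuclideanSpace ℝ (Fin d)))), (x.1, x.2.2) ∈ G := by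
    rw [ae_iff]
    exact hlift Gᶜ hGmeas.compl hGnull
  -- m: average property lifted to the triple product
  have htripleM : ∀ᵐ x ∂(volume : Measure ((EuclideanSpace ℝ (Fin k)) ×
      (EuclideanSpace ℝ (Fin q)) × (EuclideanSpace ℝ (Fin d)))), ∀ δ : ℕ → ℝ,
      Tendsto δ atTop (nhdsWithin 0 (Set.Ioi 0)) →
      Tendsto (fun j => ⨍ y in closedBall x.2.2 (δ j), ‖m y - m x.2.2‖) atTop (nhds 0) := by
    have hmae := keyC hmint
    rw [ae_iff] at hmae ⊢
    obtain ⟨N, hNsub, hNm, hN0⟩ := exists_measurable_superset_of_null hmae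
    refine measure_mono_null (fun x hx => ?_) (hlift (Set.univ ×ˢ N)
      (MeasurableSet.univ.prod hNm) ?_)
    · exact Set.mem_prod.2 ⟨Set.mem_univ _, hNsub hx⟩
    · rw [Measure.prod_prod, hN0, mul_zero]
  -- m is a.e. nonzero for the with-density measure
  have hmzero : (volume.withDensity fun x => ENNReal.ofReal (ρ x))
      {x : (EuclideanSpace ℝ (Fin k)) × (EuclideanSpace ℝ (Fin q)) ×
        (EuclideanSpace ℝ (Fin d)) | m x.2.2 = 0} = 0 := by
    have hZ : MeasurableSet {u : EuclideanSpace ℝ (Fin d) | m u = 0} :=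
      hmm (measurableSet_singleton 0)
    have hSm : MeasurableSet {x : (EuclideanSpace ℝ (Fin k)) × (EuclideanSpace ℝ (Fin q)) ×
        (EuclideanSpace ℝ (Fin d)) | m x.2.2 = 0} := (measurable_snd.snd) hZ
    rw [withDensity_apply _ hSm]
    rw [hveq]
    rw [← hmp.setLIntegral_comp_preimage_emb e.measurableEmbedding]
    have hpre : e ⁻¹' {x : (EuclideanSpace ℝ (Fin k)) × (EuclideanSpace ℝ (Fin q)) ×
        (EuclideanSpace ℝ (Fin d)) | m x.2.2 = 0} =
        Prod.snd ⁻¹' {u : EuclideanSpace ℝ (Fin d) | m u = 0} := rfl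
    have hindm : Measurable ((Prod.snd ⁻¹' {u : EuclideanSpace ℝ (Fin d) | m u = 0}).indicator
        (fun w : ((EuclideanSpace ℝ (Fin k)) × (EuclideanSpace ℝ (Fin q))) ×
          (EuclideanSpace ℝ (Fin d)) => ENNReal.ofReal (ρ (e w)))) :=
      Measurable.indicator ((hρmeas.comp e.measurable).ennreal_ofReal) (measurable_snd hZ)
    rw [hpre, ← lintegral_indicator (measurable_snd hZ),
      lintegral_prod_symm' _ hindm]
    have hpt : ∀ u : EuclideanSpace ℝ (Fin d),
        (∫⁻ p, Set.indicator (Prod.snd ⁻¹' {u : EuclideanSpace ℝ (Fin d) | m u = 0})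
          (fun w => ENNReal.ofReal (ρ (e w))) (p, u)
          ∂((volume : Measure (EuclideanSpace ℝ (Fin k))).prod
            (volume : Measure (EuclideanSpace ℝ (Fin q))))) =
        Set.indicator {u : EuclideanSpace ℝ (Fin d) | m u = 0}
          (fun u => ∫⁻ p, ENNReal.ofReal (ρ (e (p, u)))
            ∂((volume : Measure (EuclideanSpace ℝ (Fin k))).prod
              (volume : Measure (EuclideanSpace ℝ (Fin q))))) u := by
      intro u
      by_cases hu : m u = 0
      · simp only [Set.indicator_apply, Set.mem_preimage, Set.mem_setOf_eq, hu, if_true]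
      · simp only [Set.indicator_apply, Set.mem_preimage, Set.mem_setOf_eq, hu, if_false,
          lintegral_zero]
    rw [lintegral_congr hpt]
    have hae0 : ∀ᵐ u ∂(volume : Measure (EuclideanSpace ℝ (Fin d))),
        Set.indicator {u : EuclideanSpace ℝ (Fin d) | m u = 0}
          (fun u => ∫⁻ p, ENNReal.ofReal (ρ (e (p, u)))
            ∂((volume : Measure (EuclideanSpace ℝ (Fin k))).prod
              (volume : Measure (EuclideanSpace ℝ (Fin q))))) u = 0 := by
      filter_upwards [hρ'int.prod_left_ae, hm'] with u hu hmu
      by_cases hZu : m u = 0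
      · rw [Set.indicator_of_mem
          (show u ∈ {u : EuclideanSpace ℝ (Fin d) | m u = 0} from hZu)]
        have h6 : (∫⁻ p, ENNReal.ofReal (ρ (e (p, u)))
            ∂((volume : Measure (EuclideanSpace ℝ (Fin k))).prod
              (volume : Measure (EuclideanSpace ℝ (Fin q))))) =
            ENNReal.ofReal (∫ p, ρ (e (p, u))
              ∂((volume : Measure (EuclideanSpace ℝ (Fin k))).prod
                (volume : Measure (EuclideanSpace ℝ (Fin q))))) :=
          (ofReal_integral_eq_lintegral_ofReal hu
            (Eventually.of_forall fun p => hρnonneg _)).symm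
        rw [h6, ← hmu, hZu, ENNReal.ofReal_zero]
      · rw [Set.indicator_of_notMem
          (show u ∉ {u : EuclideanSpace ℝ (Fin d) | m u = 0} from hZu)]
    rw [lintegral_congr_ae hae0, lintegral_zero]
  -- pass to the with-density measure
  have habs : (volume.withDensity fun x => ENNReal.ofReal (ρ x)) ≪
      (volume : Measure ((EuclideanSpace ℝ (Fin k)) × (EuclideanSpace ℝ (Fin q)) ×
        (EuclideanSpace ℝ (Fin d)))) := withDensity_absolutelyContinuous _ _
  have hmne : ∀ᵐ x ∂(volume.withDensity fun x => ENNReal.ofReal (ρ x)),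
      m x.2.2 ≠ 0 := by
    rw [ae_iff]
    have hsetne : {x : (EuclideanSpace ℝ (Fin k)) × (EuclideanSpace ℝ (Fin q)) ×
        (EuclideanSpace ℝ (Fin d)) | ¬ m x.2.2 ≠ 0} = {x | m x.2.2 = 0} := by
      ext x; simp [not_not]
    rw [hsetne]
    exact hmzero
  filter_upwards [Eventually.filter_mono habs.ae_le htripleG,
    Eventually.filter_mono habs.ae_le htripleM, hmne] with x hx1 hx2 hx3
  intro A r hA hr hsub hvolc hto0
  obtain ⟨hfint, hΦ⟩ := hx1
  have hLf := phi_forward hfint hΦ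
  have h1 := keyB hfint hc hLf A r hA hr hsub hvolc hto0
  have h2 := keyB hmint hc hx2 A r hA hr hsub hvolc hto0
  have h3 := h1.div h2 hx3
  refine Tendsto.congr (fun t => ?_) h3
  have hcne : ENNReal.ofReal c ≠ 0 := by
    simp only [ne_eq, ENNReal.ofReal_eq_zero, not_le]; exact hc
  have hApos : 0 < volume (A t) :=
    lt_of_lt_of_le (ENNReal.mul_pos hcne
      (measure_closedBall_pos volume _ (hr t)).ne') (hvolc t)
  have hAfin : volume (A t) < ⊤ :=
    (measure_mono (hsub t)).trans_lt measure_closedBall_lt_top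
  exact div_div_aux _ _ _ (ENNReal.toReal_pos hApos.ne' hAfin.ne).ne'
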